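/- Let r ≥ 2 and let i ≠ j be two coordinates in {1,…,r}. Then the set of all edges of the r-dimensional hypercube Q_r whose endpoints differ in coordinate i, together with the set of all edges whose endpoints differ in coordinate j, is an edge general position set of Q_r of cardinality 2^r. -/

import Mathlib

open SimpleGraph

/-- A walk is a geodesic if its length equals the distance between its endpoints. -/
def IsGeodesic {V : Type*} (G : SimpleGraph V) {u v : V} (p : G.Walk u v) : Prop :=
  p.length = G.dist u v

/-- A set `S` of edges of `G` is an edge general position set if no geodesic of `G`
contains three (distinct) edges of `S`. -/
def IsEdgeGPSet {V : Type*} (G : SimpleGraph V) (S : Set (Sym2 V)) : Prop :=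
  S ⊆ G.edgeSet ∧
  ∀ ⦃u v : V⦄ (p : G.Walk u v), IsGeodesic G p →
    ∀ e₁ ∈ S, ∀ e₂ ∈ S, ∀ e₃ ∈ S,
      e₁ ∈ p.edges → e₂ ∈ p.edges → e₃ ∈ p.edges →
        e₁ = e₂ ∨ e₁ = e₃ ∨ e₂ = e₃

/-- The `r`-dimensional hypercube: vertices are functions `Fin r → Bool`, two vertices
are adjacent iff they differ in exactly one coordinate. -/
def hypercube (r : ℕ) : SimpleGraph (Fin r → Bool) where
  Adj x y := ∃! i, x i ≠ y i
  symm := by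
    constructor
    rintro x y ⟨i, hi, hu⟩
    exact ⟨i, hi.symm, fun j hj => hu j hj.symm⟩
  loopless := by
    constructor
    rintro x ⟨i, hi, -⟩
    exact hi rfl

namespace HcAux

variable {r : ℕ}

/-- indicator that `u`, `v` differ at coordinate `c` -/
def ind (c : Fin r) (u v : Fin r → Bool) : ℕ := if u c = v c then 0 else 1

lemma ind_le_one (c : Fin r) (u v : Fin r → Bool) : ind c u v ≤ 1 := by
  unfold ind; split <;> omega

def xorAt (c : Fin r) : Sym2 (Fin r → Bool) → Bool :=
  Sym2.lift ⟨fun x y => xor (x c) (y c), fun _ _ => Bool.xor_comm _ _⟩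

@[simp] lemma xorAt_mk (c : Fin r) (x y : Fin r → Bool) :
    xorAt c s(x, y) = xor (x c) (y c) := rfl

lemma xorAt_true_iff (c : Fin r) (x y : Fin r → Bool) :
    xorAt c s(x, y) = true ↔ x c ≠ y c := by
  rw [xorAt_mk]
  cases hx : x c <;> cases hy : y c <;> simp

lemma sum_ind_eq_one {u w : Fin r → Bool} (h : (hypercube r).Adj u w) :
    ∑ c, ind c u w = 1 := by
  obtain ⟨c₀, hc₀, hu⟩ := h
  have : ∀ c : Fin r, ind c u w = if c = c₀ then 1 else 0 := by
    intro c
    by_cases hc : c = c₀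
    · subst hc; simp [ind, hc₀]
    · have : u c = w c := by
        by_contra hne; exact hc (hu c hne)
      simp [ind, this, hc]
  rw [Finset.sum_congr rfl (fun c _ => this c)]
  simp

lemma sum_countP {u v : Fin r → Bool} (p : (hypercube r).Walk u v) :
    ∑ c, p.edges.countP (fun e => xorAt c e) = p.length := by
  induction p with
  | nil => simp
  | @cons a b v h q ih =>
    simp only [Walk.edges_cons, List.countP_cons, Walk.length_cons]
    rw [Finset.sum_add_distrib, ih]
    have : ∀ c : Fin r, (if (xorAt c s(a, b)) = true then 1 else 0) = ind c a b := by
      intro c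
      by_cases hc : a c = b c
      · simp [ind, hc, xorAt_true_iff]
      · simp [ind, hc, (xorAt_true_iff c a b).2 hc]
    rw [Finset.sum_congr rfl (fun c _ => this c), sum_ind_eq_one h]

lemma ind_le_countP {u v : Fin r → Bool} (p : (hypercube r).Walk u v) (c : Fin r) :
    ind c u v ≤ p.edges.countP (fun e => xorAt c e) := by
  induction p with
  | nil => simp [ind]
  | @cons a b v h q ih =>
    simp only [Walk.edges_cons, List.countP_cons]
    by_cases hav : a c = v c
    · simp [ind, hav]
    · have h1 : ind c a v = 1 := by simp [ind, hav]
      by_cases hab : a c = b c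
      · have hbv : ¬ b c = v c := fun hb => hav (hab.trans hb)
        have h2 : ind c b v = 1 := by simp [ind, hbv]
        omega
      · have h3 : (if (xorAt c s(a, b)) = true then 1 else 0) = 1 := by
          simp [(xorAt_true_iff c a b).2 hab]
        omega

lemma exists_walk (n : ℕ) : ∀ u v : Fin r → Bool, (∑ c, ind c u v) = n →
    ∃ p : (hypercube r).Walk u v, p.length = n := by
  induction n with
  | zero =>
    intro u v h
    have huv : u = v := by
      funext c
      have hc : ind c u v = 0 :=
        Finset.sum_eq_zero_iff.mp h c (Finset.mem_univ c)
      by_contra hne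
      simp [ind, hne] at hc
    subst huv
    exact ⟨Walk.nil, rfl⟩
  | succ n ih =>
    intro u v h
    have hex : ∃ c, u c ≠ v c := by
      by_contra hall
      push_neg at hall
      simp [ind, fun c => hall c] at h
    obtain ⟨c₀, hc₀⟩ := hex
    set w : Fin r → Bool := Function.update u c₀ (v c₀) with hw
    have hwc₀ : w c₀ = v c₀ := by simp [hw]
    have hwd : ∀ d, d ≠ c₀ → w d = u d := by
      intro d hd; simp [hw, Function.update_of_ne hd]
    have hadj : (hypercube r).Adj u w := by
      refine ⟨c₀, show u c₀ ≠ w c₀ by rw [hwc₀]; exact hc₀, ?_⟩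
      intro d hd
      by_contra hdc
      exact hd (hwd d hdc).symm
    have hsum : ∑ c, ind c w v = n := by
      have e1 : ind c₀ u v + ∑ c ∈ Finset.univ.erase c₀, ind c u v = ∑ c, ind c u v :=
        Finset.add_sum_erase _ (fun c => ind c u v) (Finset.mem_univ c₀)
      have e2 : ind c₀ w v + ∑ c ∈ Finset.univ.erase c₀, ind c w v = ∑ c, ind c w v :=
        Finset.add_sum_erase _ (fun c => ind c w v) (Finset.mem_univ c₀)
      have e3 : ∑ c ∈ Finset.univ.erase c₀, ind c w v = ∑ c ∈ Finset.univ.erase c₀, ind c u v := by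
        refine Finset.sum_congr rfl (fun c hc => ?_)
        have : c ≠ c₀ := Finset.ne_of_mem_erase hc
        simp [ind, hwd c this]
      have e4 : ind c₀ u v = 1 := by simp [ind, hc₀]
      have e5 : ind c₀ w v = 0 := by simp [ind, hwc₀]
      omega
    obtain ⟨q, hq⟩ := ih w v hsum
    exact ⟨Walk.cons hadj q, by simp [hq]⟩

def IsGeodesic' {V : Type*} (G : SimpleGraph V) {u v : V} (p : G.Walk u v) : Prop :=
  p.length = G.dist u v

lemma countP_le_one {u v : Fin r → Bool} (p : (hypercube r).Walk u v)
    (hp : IsGeodesic' (hypercube r) p) (c : Fin r) :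
    p.edges.countP (fun e => xorAt c e) ≤ 1 := by
  obtain ⟨q, hq⟩ := exists_walk (∑ c, ind c u v) u v rfl
  have hdist : (hypercube r).dist u v ≤ ∑ c, ind c u v := hq ▸ SimpleGraph.dist_le q
  have hlen : ∑ d, p.edges.countP (fun e => xorAt d e) = p.length := sum_countP p
  have hple : p.length ≤ ∑ c, ind c u v := le_trans (le_of_eq hp) hdist
  by_contra hgt
  push_neg at hgt
  have h1 : ind c u v < p.edges.countP (fun e => xorAt c e) :=
    lt_of_le_of_lt (ind_le_one c u v) hgt
  have := Finset.sum_lt_sum (fun d _ => ind_le_countP p d)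
    ⟨c, Finset.mem_univ c, h1⟩
  omega

lemma two_le_countP {α : Type*} [DecidableEq α] {l : List α} {p : α → Bool} {a b : α}
    (ha : a ∈ l) (hb : b ∈ l) (hab : a ≠ b) (hpa : p a = true) (hpb : p b = true) :
    2 ≤ l.countP p := by
  rw [List.countP_eq_length_filter]
  have ha' : a ∈ l.filter p := List.mem_filter.2 ⟨ha, hpa⟩
  have hb' : b ∈ l.filter p := List.mem_filter.2 ⟨hb, hpb⟩
  calc 2 = ({a, b} : Finset α).card := by
        rw [Finset.card_insert_of_notMem (by simp [hab]), Finset.card_singleton]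
    _ ≤ (l.filter p).toFinset.card := by
        apply Finset.card_le_card
        intro x hx
        rcases Finset.mem_insert.1 hx with h | h
        · subst h; exact List.mem_toFinset.2 ha'
        · rw [Finset.mem_singleton] at h; subst h; exact List.mem_toFinset.2 hb'
    _ ≤ (l.filter p).length := List.toFinset_card_le _

lemma eq_of_flip {u v : Fin r → Bool} (p : (hypercube r).Walk u v)
    (hp : IsGeodesic' (hypercube r) p) {c : Fin r} {e f : Sym2 (Fin r → Bool)}
    (he : e ∈ p.edges) (hf : f ∈ p.edges)
    (hec : xorAt c e = true) (hfc : xorAt c f = true) : e = f := by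
  by_contra hef
  exact absurd (countP_le_one p hp c) (by
    have := two_le_countP (p := fun e => xorAt c e) he hf hef hec hfc
    omega)

def classAt (r : ℕ) (c : Fin r) : Set (Sym2 (Fin r → Bool)) :=
  {e | ∃ x y : Fin r → Bool, e = s(x, y) ∧ (hypercube r).Adj x y ∧ x c ≠ y c}

lemma xorAt_of_mem {c : Fin r} {e : Sym2 (Fin r → Bool)} (h : e ∈ classAt r c) :
    xorAt c e = true := by
  obtain ⟨x, y, rfl, -, hc⟩ := h
  exact (xorAt_true_iff c x y).2 hc

lemma eq_update_of_adj {x y : Fin r → Bool} {c : Fin r}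
    (h : (hypercube r).Adj x y) (hc : x c ≠ y c) :
    y = Function.update x c (!(x c)) := by
  obtain ⟨c₀, hc₀, hu⟩ := h
  have hcc : c = c₀ := hu c hc
  subst hcc
  funext d
  by_cases hd : d = c
  · subst hd
    rw [Function.update_self]
    cases hxd : x d <;> cases hyd : y d <;> simp_all
  · rw [Function.update_of_ne hd]
    by_contra hne
    exact hd (hu d (Ne.symm hne))

lemma adj_update (x : Fin r → Bool) (c : Fin r) :
    (hypercube r).Adj x (Function.update x c (!(x c))) := by
  have h1 : x c ≠ Function.update x c (!(x c)) c := by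
    rw [Function.update_self]
    cases x c <;> simp
  refine ⟨c, h1, fun d hd => ?_⟩
  by_contra hdc
  exact hd (by rw [Function.update_of_ne hdc])

lemma flip_flip (x : Fin r → Bool) (c : Fin r) :
    Function.update (Function.update x c (!(x c))) c
      (!(Function.update x c (!(x c)) c)) = x := by
  funext d
  by_cases hd : d = c
  · subst hd; simp
  · simp [Function.update_of_ne hd]

lemma classAt_eq (c : Fin r) :
    classAt r c = (fun x => s(x, Function.update x c (!(x c)))) '' {x | x c = false} := by
  ext e
  constructor
  · rintro ⟨x, y, rfl, hadj, hc⟩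
    have hy : y = Function.update x c (!(x c)) := eq_update_of_adj hadj hc
    subst hy
    by_cases hxc : x c = false
    · exact ⟨x, hxc, rfl⟩
    · rw [Bool.not_eq_false] at hxc
      refine ⟨Function.update x c (!(x c)), by simp [hxc], ?_⟩
      show s(Function.update x c (!(x c)),
            Function.update (Function.update x c (!(x c))) c
              (!(Function.update x c (!(x c)) c))) = _
      rw [flip_flip, Sym2.eq_swap]
  · rintro ⟨x, hx, rfl⟩
    refine ⟨x, Function.update x c (!(x c)), rfl, adj_update x c, ?_⟩
    rw [Function.update_self]
    cases x c <;> simp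

lemma injOn_flip (c : Fin r) :
    Set.InjOn (fun x => s(x, Function.update x c (!(x c)))) {x : Fin r → Bool | x c = false} := by
  intro x hx y hy hxy
  simp only [Sym2.eq_iff] at hxy
  rcases hxy with ⟨h1, -⟩ | ⟨h1, h2⟩
  · exact h1
  · exfalso
    have hxc : x c = true := by
      rw [h1, Function.update_self, show y c = false from hy]
      rfl
    rw [show x c = false from hx] at hxc
    exact Bool.false_ne_true hxc

def subEquiv (c : Fin r) : {x : Fin r → Bool // x c = false} ≃ ({d : Fin r // d ≠ c} → Bool) where
  toFun x d := x.1 d.1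
  invFun f := ⟨fun d => if h : d = c then false else f ⟨d, h⟩, by simp⟩
  left_inv x := by
    apply Subtype.ext
    funext d
    by_cases hd : d = c
    · subst hd; simp [x.2]
    · simp [hd]
  right_inv f := by
    funext d
    simp [d.2]

lemma ncard_false (c : Fin r) : ({x : Fin r → Bool | x c = false}).ncard = 2 ^ (r - 1) := by
  have e : {x : Fin r → Bool | x c = false} ≃ ({d : Fin r // d ≠ c} → Bool) := subEquiv c
  have hcard : Fintype.card {d : Fin r // d ≠ c} = r - 1 := by
    have h2 : Fintype.card {d : Fin r // ¬ (d = c)} = r - 1 := by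
      rw [Fintype.card_subtype_compl, Fintype.card_subtype_eq, Fintype.card_fin]
    exact h2
  rw [← Nat.card_coe_set_eq, Nat.card_congr e, Nat.card_eq_fintype_card,
    Fintype.card_fun, Fintype.card_bool, hcard]

lemma ncard_classAt (c : Fin r) : (classAt r c).ncard = 2 ^ (r - 1) := by
  rw [classAt_eq, Set.ncard_image_of_injOn (injOn_flip c), ncard_false]

lemma disj {i j : Fin r} (hij : i ≠ j) : Disjoint (classAt r i) (classAt r j) := by
  rw [Set.disjoint_left]
  rintro e ⟨x, y, rfl, hadj, hxi⟩ ⟨x', y', heq, hadj', hxj⟩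
  have hxyj : x j ≠ y j := by
    rcases Sym2.eq_iff.1 heq.symm with ⟨h1, h2⟩ | ⟨h1, h2⟩
    · rw [h1, h2] at hxj; exact hxj
    · rw [h1, h2] at hxj; exact fun h => hxj h.symm
  obtain ⟨c₀, hc₀, hu⟩ := hadj
  exact hij ((hu i hxi).trans (hu j hxyj).symm)

end HcAux


/-- For `r ≥ 2` and distinct coordinates `i ≠ j`, the set of edges of `Q_r` whose endpoints
differ in coordinate `i`, together with those whose endpoints differ in coordinate `j`,
is an edge general position set of `Q_r` of cardinality `2^r`. -/
theorem hypercube_two_coord_classes (r : ℕ) (hr : 2 ≤ r) (i j : Fin r) (hij : i ≠ j) :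
    IsEdgeGPSet (hypercube r)
      ({e | ∃ x y : Fin r → Bool, e = s(x, y) ∧ (hypercube r).Adj x y ∧ x i ≠ y i} ∪
       {e | ∃ x y : Fin r → Bool, e = s(x, y) ∧ (hypercube r).Adj x y ∧ x j ≠ y j}) ∧
    ({e | ∃ x y : Fin r → Bool, e = s(x, y) ∧ (hypercube r).Adj x y ∧ x i ≠ y i} ∪
     {e | ∃ x y : Fin r → Bool, e = s(x, y) ∧ (hypercube r).Adj x y ∧ x j ≠ y j} :
       Set (Sym2 (Fin r → Bool))).ncard = 2 ^ r := by
  constructor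
  · constructor
    · rintro e (⟨x, y, rfl, hadj, -⟩ | ⟨x, y, rfl, hadj, -⟩) <;> exact hadj
    · intro u v p hp e₁ h1 e₂ h2 e₃ h3 m1 m2 m3
      rcases h1 with h1 | h1 <;> rcases h2 with h2 | h2 <;> rcases h3 with h3 | h3
      · exact Or.inl (HcAux.eq_of_flip p hp m1 m2 (HcAux.xorAt_of_mem h1) (HcAux.xorAt_of_mem h2))
      · exact Or.inl (HcAux.eq_of_flip p hp m1 m2 (HcAux.xorAt_of_mem h1) (HcAux.xorAt_of_mem h2))
      · exact Or.inr (Or.inl (HcAux.eq_of_flip p hp m1 m3 (HcAux.xorAt_of_mem h1) (HcAux.xorAt_of_mem h3)))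
      · exact Or.inr (Or.inr (HcAux.eq_of_flip p hp m2 m3 (HcAux.xorAt_of_mem h2) (HcAux.xorAt_of_mem h3)))
      · exact Or.inr (Or.inr (HcAux.eq_of_flip p hp m2 m3 (HcAux.xorAt_of_mem h2) (HcAux.xorAt_of_mem h3)))
      · exact Or.inr (Or.inl (HcAux.eq_of_flip p hp m1 m3 (HcAux.xorAt_of_mem h1) (HcAux.xorAt_of_mem h3)))
      · exact Or.inl (HcAux.eq_of_flip p hp m1 m2 (HcAux.xorAt_of_mem h1) (HcAux.xorAt_of_mem h2))
      · exact Or.inl (HcAux.eq_of_flip p hp m1 m2 (HcAux.xorAt_of_mem h1) (HcAux.xorAt_of_mem h2))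
  · show (HcAux.classAt r i ∪ HcAux.classAt r j).ncard = 2 ^ r
    rw [Set.ncard_union_eq (HcAux.disj hij) (Set.toFinite _) (Set.toFinite _),
      HcAux.ncard_classAt, HcAux.ncard_classAt]
    have h1 : r - 1 + 1 = r := by omega
    calc 2 ^ (r - 1) + 2 ^ (r - 1) = 2 ^ (r - 1 + 1) := by rw [pow_succ]; ring
      _ = 2 ^ r := by rw [h1]
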